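/- Let R be a commutative ring and A ∈ Mat_{m×m}(R) a square matrix such that det(A) is not a zero divisor. Then Ann.Coker(A) = I_m(A) : I_{m-1}(A). -/

import Mathlib

/-- The determinantal ideal `I_j(A)` generated by the `j × j` minors of `A`. -/
def detIdeal {R : Type*} [CommRing R] {m n : ℕ} (A : Matrix (Fin m) (Fin n) R)
    (j : ℕ) : Ideal R :=
  Ideal.span { x | ∃ (r : Fin j → Fin m) (c : Fin j → Fin n), x = (A.submatrix r c).det }

/-- `Ann.Coker(A) = Ann(R^m / A(R^n))`. -/
noncomputable def annCoker {R : Type*} [CommRing R] {m n : ℕ}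
    (A : Matrix (Fin m) (Fin n) R) : Ideal R :=
  Module.annihilator R ((Fin m → R) ⧸ LinearMap.range A.mulVecLin)

section aux

variable {R : Type*} [CommRing R]

lemma dvd_mul_cmul {d x y : R} (c : R) (h : d ∣ x * y) : d ∣ x * (c * y) := by
  have := h.mul_left c
  rwa [show c * (x * y) = x * (c * y) by ring] at this

lemma dvd_of_dvd_mul_negonepow {d x y : R} (e : ℕ) (h : d ∣ x * ((-1) ^ e * y)) :
    d ∣ x * y := by
  have h2 := h.mul_left ((-1 : R) ^ e)
  have he : (-1 : R) ^ e * (-1 : R) ^ e = 1 := by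
    rw [← pow_add]; exact Even.neg_one_pow ⟨e, rfl⟩
  have : (-1 : R) ^ e * (x * ((-1 : R) ^ e * y)) = x * y := by
    calc (-1 : R) ^ e * (x * ((-1 : R) ^ e * y))
        = ((-1 : R) ^ e * (-1 : R) ^ e) * (x * y) := by ring
      _ = x * y := by rw [he, one_mul]
  rwa [this] at h2

/-- Determinant of submatrix along two permutations is a multiple of the det. -/
lemma det_submatrix_dvd {k : ℕ} (A : Matrix (Fin k) (Fin k) R)
    (e₁ e₂ : Equiv.Perm (Fin k)) : A.det ∣ (A.submatrix e₁ e₂).det := by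
  have h : A.submatrix e₁ e₂ = (A.submatrix e₂ e₂).submatrix (e₁.trans e₂.symm) id := by
    ext i j; simp [Matrix.submatrix_apply]
  rw [h, Matrix.det_permute, Matrix.det_submatrix_equiv_self]
  exact dvd_mul_left _ _

/-- Any square submatrix of a square matrix has determinant in the span of `det A`. -/
lemma det_submatrix_mem {k : ℕ} (A : Matrix (Fin k) (Fin k) R)
    (r c : Fin k → Fin k) : (A.submatrix r c).det ∈ Ideal.span {A.det} := by
  by_cases hr : Function.Injective r
  · by_cases hc : Function.Injective c
    · have hbr := Finite.injective_iff_bijective.mp hr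
      have hbc := Finite.injective_iff_bijective.mp hc
      rw [Ideal.mem_span_singleton]
      exact det_submatrix_dvd A (Equiv.ofBijective r hbr) (Equiv.ofBijective c hbc)
    · obtain ⟨a, b, hab, hne⟩ := Function.not_injective_iff.mp hc
      have : (A.submatrix r c).det = 0 := by
        rw [← Matrix.det_transpose, Matrix.transpose_submatrix]
        exact Matrix.det_zero_of_row_eq hne (by ext i; simp [hab])
      rw [this]; exact Ideal.zero_mem _
  · obtain ⟨a, b, hab, hne⟩ := Function.not_injective_iff.mp hr
    have : (A.submatrix r c).det = 0 :=
      Matrix.det_zero_of_row_eq hne (by ext i; simp [hab])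
    rw [this]; exact Ideal.zero_mem _

lemma detIdeal_self {k : ℕ} (A : Matrix (Fin k) (Fin k) R) :
    detIdeal A k = Ideal.span {A.det} := by
  apply le_antisymm
  · rw [detIdeal, Ideal.span_le]
    rintro x ⟨r, c, rfl⟩
    exact det_submatrix_mem A r c
  · rw [Ideal.span_le]
    rintro x (rfl : x = A.det)
    exact Ideal.subset_span ⟨id, id, by simp⟩

/-- Factorization of an injective map `Fin n → Fin (n+1)`. -/
lemma injective_factor {n : ℕ} {f : Fin n → Fin (n + 1)} (hf : Function.Injective f) :
    ∃ (j₀ : Fin (n + 1)) (σ : Equiv.Perm (Fin n)), f = j₀.succAbove ∘ σ := by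
  have hns : ¬ Function.Surjective f := by
    intro hs
    have := Fintype.card_le_of_surjective f hs
    simp at this
  rw [Function.Surjective] at hns
  push_neg at hns
  obtain ⟨j₀, hj₀⟩ := hns
  refine ⟨j₀, ?_⟩
  have hcard : Fintype.card (Fin n) = Fintype.card {x : Fin (n+1) // x ≠ j₀} := by
    simp [Fintype.card_subtype_compl]
  let g : Fin n → {x : Fin (n+1) // x ≠ j₀} := fun i => ⟨f i, hj₀ i⟩
  have hg : Function.Bijective g := by
    rw [Fintype.bijective_iff_injective_and_card]
    exact ⟨fun a b hab => hf (congrArg Subtype.val hab), hcard⟩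
  let e := Equiv.ofBijective g hg
  refine ⟨e.trans (finSuccAboveEquiv j₀).symm, ?_⟩
  funext i
  have h1 : (finSuccAboveEquiv j₀) ((finSuccAboveEquiv j₀).symm (e i)) = e i :=
    (finSuccAboveEquiv j₀).apply_symm_apply _
  have h2 : j₀.succAbove ((finSuccAboveEquiv j₀).symm (e i)) = (e i : Fin (n+1)) :=
    congrArg Subtype.val h1
  exact h2.symm

/-- Characterization of the annihilator of the cokernel. -/
lemma mem_annCoker_iff {k : ℕ} (A : Matrix (Fin k) (Fin k) R)
    (hdet : A.det ∈ nonZeroDivisors R) (x : R) :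
    x ∈ annCoker A ↔ ∀ i j, A.det ∣ x * A.adjugate i j := by
  constructor
  · intro hx i j
    rw [annCoker, Module.mem_annihilator] at hx
    have h := hx (Submodule.Quotient.mk (Pi.single j (1 : R)))
    rw [← Submodule.Quotient.mk_smul, Submodule.Quotient.mk_eq_zero] at h
    obtain ⟨w, hw⟩ := h
    have hw' : A.mulVec w = x • (Pi.single j 1 : Fin k → R) := hw
    have key : A.adjugate.mulVec (A.mulVec w) = A.det • w := by
      rw [Matrix.mulVec_mulVec, Matrix.adjugate_mul, Matrix.smul_mulVec,
        Matrix.one_mulVec]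
    rw [hw', Matrix.mulVec_smul, Matrix.mulVec_single] at key
    have := congrFun key i
    simp only [Pi.smul_apply, smul_eq_mul, mul_one] at this
    exact ⟨w i, by rw [← this]; simp⟩
  · intro h
    have hB : ∀ i j, ∃ b, x * A.adjugate i j = A.det * b := fun i j => h i j
    choose B0 hBspec using hB
    set B : Matrix (Fin k) (Fin k) R := Matrix.of B0 with hBdef
    have hAB : A * B = x • (1 : Matrix (Fin k) (Fin k) R) := by
      ext i j
      rw [← mul_cancel_left_mem_nonZeroDivisors hdet]
      calc A.det * (A * B) i j
          = ∑ l, A i l * (A.det * B l j) := by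
            rw [Matrix.mul_apply, Finset.mul_sum]
            exact Finset.sum_congr rfl fun l _ => by ring
        _ = ∑ l, A i l * (x * A.adjugate l j) := by
            exact Finset.sum_congr rfl fun l _ => by rw [show B l j = B0 l j from rfl, ← hBspec]
        _ = x * (A * A.adjugate) i j := by
            rw [Matrix.mul_apply, Finset.mul_sum]
            exact Finset.sum_congr rfl fun l _ => by ring
        _ = A.det * (x • (1 : Matrix (Fin k) (Fin k) R)) i j := by
            rw [Matrix.mul_adjugate]
            simp only [Matrix.smul_apply, smul_eq_mul]
            ring
    rw [annCoker, Module.mem_annihilator]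
    intro q
    obtain ⟨v, rfl⟩ := Submodule.Quotient.mk_surjective _ q
    rw [← Submodule.Quotient.mk_smul, Submodule.Quotient.mk_eq_zero]
    refine ⟨B.mulVec v, ?_⟩
    show A.mulVec (B.mulVec v) = x • v
    rw [Matrix.mulVec_mulVec, hAB, Matrix.smul_mulVec, Matrix.one_mulVec]

/-- Characterization of the colon ideal in the square case. -/
lemma mem_colon_iff {n : ℕ} (A : Matrix (Fin (n + 1)) (Fin (n + 1)) R) (x : R) :
    x ∈ (detIdeal A (n + 1)).colon (detIdeal A n) ↔
      ∀ i j, A.det ∣ x * A.adjugate i j := by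
  rw [detIdeal_self]
  constructor
  · intro hx i j
    have hgen : (A.submatrix j.succAbove i.succAbove).det ∈ detIdeal A n :=
      Ideal.subset_span ⟨j.succAbove, i.succAbove, rfl⟩
    have h := Submodule.mem_colon.mp hx _ hgen
    rw [smul_eq_mul, Ideal.mem_span_singleton] at h
    rw [Matrix.adjugate_fin_succ_eq_det_submatrix]
    exact dvd_mul_cmul _ h
  · intro h
    rw [Submodule.mem_colon]
    intro p hp
    rw [smul_eq_mul]
    refine Submodule.span_induction ?_ ?_ ?_ ?_ hp
    · rintro y ⟨r, c, rfl⟩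
      by_cases hr : Function.Injective r
      · by_cases hc : Function.Injective c
        · obtain ⟨j₀, σ, rfl⟩ := injective_factor hr
          obtain ⟨i₀, τ, rfl⟩ := injective_factor hc
          have hsub : A.submatrix (j₀.succAbove ∘ σ) (i₀.succAbove ∘ τ)
              = ((A.submatrix j₀.succAbove i₀.succAbove).submatrix σ id).submatrix id τ := by
            ext a b; simp
          rw [Ideal.mem_span_singleton, hsub, Matrix.det_permute', Matrix.det_permute]
          have hd : A.det ∣ x * (A.submatrix j₀.succAbove i₀.succAbove).det := by
            have h0 := h i₀ j₀
            rw [Matrix.adjugate_fin_succ_eq_det_submatrix] at h0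
            exact dvd_of_dvd_mul_negonepow _ h0
          exact dvd_mul_cmul _ (dvd_mul_cmul _ hd)
        · obtain ⟨a, b, hab, hne⟩ := Function.not_injective_iff.mp hc
          have h0 : (A.submatrix r c).det = 0 := by
            rw [← Matrix.det_transpose, Matrix.transpose_submatrix]
            exact Matrix.det_zero_of_row_eq hne (by ext i; simp [hab])
          rw [h0, mul_zero]; exact Ideal.zero_mem _
      · obtain ⟨a, b, hab, hne⟩ := Function.not_injective_iff.mp hr
        have h0 : (A.submatrix r c).det = 0 :=
          Matrix.det_zero_of_row_eq hne (by ext i; simp [hab])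
        rw [h0, mul_zero]; exact Ideal.zero_mem _
    · rw [mul_zero]; exact Ideal.zero_mem _
    · intro a b _ _ ha hb
      rw [mul_add]; exact Ideal.add_mem _ ha hb
    · intro a y _ hy
      rw [smul_eq_mul, show x * (a * y) = a * (x * y) by ring]
      exact Ideal.mul_mem_left _ _ hy

end aux

/-- If `A` is square and `det(A)` is not a zero divisor, then
`Ann.Coker(A) = I_m(A) : I_{m-1}(A)`. -/
theorem stmt_7 {R : Type*} [CommRing R] {m : ℕ} (A : Matrix (Fin m) (Fin m) R)
    (hdet : A.det ∈ nonZeroDivisors R) :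
    annCoker A = (detIdeal A m).colon (detIdeal A (m - 1)) := by
  cases m with
  | zero =>
      ext x
      rw [mem_annCoker_iff A hdet]
      simp only [Nat.zero_sub]
      constructor
      · intro _
        rw [Submodule.mem_colon]
        intro p _
        rw [detIdeal_self, Matrix.det_isEmpty, Ideal.span_singleton_one]
        trivial
      · intro _ i j
        exact absurd i.2 (by omega)
  | succ n =>
      ext x
      rw [mem_annCoker_iff A hdet]
      have : n + 1 - 1 = n := rfl
      rw [this, mem_colon_iff A x]
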